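/- arXiv:2504.19031 — 2 statements merged into one kernel-verified Lean document; each statement's English description precedes it below -/
import Mathlib

section
/- The constant term of (x + x^{-1} + y + y^{-1})^n, as a Laurent polynomial in two variables over the integers, equals (binomial(n, n/2))^2 when n is even and equals 0 when n is odd. -/
open LaurentPolynomial

open Finsupp AddMonoidAlgebra

noncomputable def P2 : AddMonoidAlgebra ℤ (ℤ × ℤ) :=
  AddMonoidAlgebra.single (1, 0) 1 + AddMonoidAlgebra.single (-1, 0) 1 +
    AddMonoidAlgebra.single (0, 1) 1 + AddMonoidAlgebra.single (0, -1) 1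

noncomputable def q : AddMonoidAlgebra ℤ ℤ := AddMonoidAlgebra.single 1 1 + AddMonoidAlgebra.single (-1) 1

def φ : ℤ × ℤ →+ ℤ × ℤ := AddMonoidHom.mk' (fun p => (p.1 + p.2, p.1 - p.2))
  (by intro a b; ext <;> simp <;> ring)

lemma hφ : Function.Injective φ := by
  intro a b h
  simp only [φ, AddMonoidHom.mk'_apply, Prod.mk.injEq] at h
  ext <;> omega

def i1 : ℤ →+ ℤ × ℤ := AddMonoidHom.inl ℤ ℤ
def i2 : ℤ →+ ℤ × ℤ := AddMonoidHom.inr ℤ ℤ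

lemma hi1 : Function.Injective i1 := fun a b h => by simpa [i1] using h
lemma hi2 : Function.Injective i2 := fun a b h => by simpa [i2] using h

noncomputable def F := AddMonoidAlgebra.mapDomainRingHom ℤ φ
noncomputable def G1 := AddMonoidAlgebra.mapDomainRingHom (M := ℤ) ℤ i1
noncomputable def G2 := AddMonoidAlgebra.mapDomainRingHom (M := ℤ) ℤ i2

lemma FP2 : F P2 = G1 q * G2 q := by
  simp only [F, G1, G2, P2, q, map_add, AddMonoidAlgebra.mapDomainRingHom_apply,
    AddMonoidAlgebra.mapDomain_single]
  simp only [add_mul, mul_add, AddMonoidAlgebra.single_mul_single, mul_one,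
    φ, AddMonoidHom.mk'_apply, i1, i2, AddMonoidHom.inl_apply, AddMonoidHom.inr_apply,
    Prod.mk_add_mk, add_zero, zero_add, sub_zero, zero_sub]
  ring

lemma G1_support (p : AddMonoidAlgebra ℤ ℤ) : ∀ a ∈ (G1 p).coeff.support, a.2 = 0 := by
  intro a ha
  have h := Finsupp.mapDomain_support (f := ⇑i1) (s := p.coeff) ha
  simp only [Finset.mem_image] at h
  obtain ⟨b, -, rfl⟩ := h
  rfl

lemma G2_support (p : AddMonoidAlgebra ℤ ℤ) : ∀ a ∈ (G2 p).coeff.support, a.1 = 0 := by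
  intro a ha
  have h := Finsupp.mapDomain_support (f := ⇑i2) (s := p.coeff) ha
  simp only [Finset.mem_image] at h
  obtain ⟨b, -, rfl⟩ := h
  rfl

lemma G1_apply0 (p : AddMonoidAlgebra ℤ ℤ) : (G1 p).coeff (0, 0) = p.coeff 0 := by
  have := Finsupp.mapDomain_apply hi1 p.coeff 0
  simpa [i1, G1, AddMonoidAlgebra.coeff_mapDomain] using this

lemma G2_apply0 (p : AddMonoidAlgebra ℤ ℤ) : (G2 p).coeff (0, 0) = p.coeff 0 := by
  have := Finsupp.mapDomain_apply hi2 p.coeff 0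
  simpa [i2, G2, AddMonoidAlgebra.coeff_mapDomain] using this

lemma mul_ct (p r : AddMonoidAlgebra ℤ ℤ) : (G1 p * G2 r).coeff (0, 0) = p.coeff 0 * r.coeff 0 := by
  classical
  rw [AddMonoidAlgebra.coeff_mul]
  have inner : ∀ a₁ : ℤ × ℤ, a₁.2 = 0 →
      (Finsupp.sum (G2 r).coeff fun a₂ b₂ => if a₁ + a₂ = (0, 0) then (G1 p).coeff a₁ * b₂ else 0)
        = if a₁ = (0,0) then (G1 p).coeff (0,0) * (G2 r).coeff (0,0) else 0 := by
    intro a₁ h1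
    rw [Finsupp.sum]
    by_cases ha : a₁ = (0, 0)
    · subst ha
      rw [if_pos rfl]
      rw [Finset.sum_eq_single (0, 0)]
      · simp
      · intro b hb hbne
        rw [if_neg]
        simpa [Prod.ext_iff, eq_comm] using fun h _ => hbne (by simp [Prod.ext_iff]; omega)
      · intro h
        rw [Finsupp.notMem_support_iff.mp h, mul_zero, ite_self]
    · rw [if_neg ha]
      apply Finset.sum_eq_zero
      intro a₂ ha₂
      rw [if_neg]
      intro h
      refine ha (Prod.ext_iff.mpr ⟨?_, h1⟩)
      have := congrArg Prod.fst h
      simp only [Prod.fst_add, G2_support r a₂ ha₂, add_zero] at this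
      exact this
  rw [Finsupp.sum]
  rw [Finset.sum_congr rfl (fun a₁ ha₁ => inner a₁ (G1_support p a₁ ha₁))]
  rw [Finset.sum_ite_eq' (G1 p).coeff.support (0,0) (fun _ => (G1 p).coeff (0,0) * (G2 r).coeff (0,0))]
  by_cases h : ((0:ℤ),(0:ℤ)) ∈ (G1 p).coeff.support
  · rw [if_pos h, G1_apply0, G2_apply0]
  · rw [if_neg h]
    have : (G1 p).coeff (0,0) = 0 := Finsupp.notMem_support_iff.mp h
    rw [← G1_apply0, this, zero_mul]
lemma q_pow (n : ℕ) : q ^ n = ∑ k ∈ Finset.range (n+1),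
    AddMonoidAlgebra.single ((k : ℤ) - (n - k : ℕ)) (n.choose k : ℤ) := by
  rw [q, add_pow]
  refine Finset.sum_congr rfl fun k hk => ?_
  rw [AddMonoidAlgebra.single_pow, AddMonoidAlgebra.single_pow, AddMonoidAlgebra.single_mul_single]
  have : ((n.choose k : ℕ) : AddMonoidAlgebra ℤ ℤ) = AddMonoidAlgebra.single 0 ((n.choose k : ℕ) : ℤ) := by
    rw [AddMonoidAlgebra.natCast_def]
  push_cast [this, AddMonoidAlgebra.single_mul_single]
  congr 1 <;> simp <;> ring

lemma q_ct (n : ℕ) : (q ^ n).coeff 0 = if Even n then (n.choose (n / 2) : ℤ) else 0 := by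
  rw [q_pow, AddMonoidAlgebra.coeff_sum, Finsupp.finset_sum_apply]
  simp only [AddMonoidAlgebra.coeff_single, Finsupp.single_apply]
  by_cases hn : Even n
  · obtain ⟨m, hm⟩ := hn
    rw [if_pos ⟨m, hm⟩]
    rw [Finset.sum_eq_single m]
    · have : ((m:ℤ) - (n - m : ℕ)) = 0 := by
        have : n - m = m := by omega
        rw [this]; ring
      simp [this, hm]
      congr 1
      omega
    · intro b hb hbm
      rw [if_neg]
      intro h
      simp at hb
      omega
    · intro h
      simp at h
      omega
  · rw [if_neg hn]
    apply Finset.sum_eq_zero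
    intro k hk
    rw [if_neg]
    intro h
    simp at hk
    exact hn ⟨k, by omega⟩

theorem stmt0 (n : ℕ) :
    (P2 ^ n).coeff (0, 0) = if Even n then ((n.choose (n / 2) : ℤ)) ^ 2 else 0 := by
  have h1 : (P2 ^ n).coeff (0, 0) = (F (P2 ^ n)).coeff (0, 0) := by
    have := Finsupp.mapDomain_apply hφ (P2 ^ n).coeff (0, 0)
    have hz : φ (0, 0) = (0, 0) := by simp [φ]
    rw [hz] at this
    exact this.symm
  rw [h1, map_pow, FP2, mul_pow, ← map_pow, ← map_pow, mul_ct, q_ct]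
  by_cases hn : Even n <;> simp [hn, sq]
end

section
/- For the Laurent polynomial P(t) = 4t^2 + 6t + 1 + 6t^{-1} over 𝔽₇, the constant term of P(t)^n is nonzero in 𝔽₇ for all n with 0 ≤ n < 49 = 7^2, giving a counterexample to the conjecture that the first zero of ct(P^n) mod p must occur before p^{deg P}. -/
open LaurentPolynomial

noncomputable def P : LaurentPolynomial (ZMod 7) := 4 * T 2 + 6 * T 1 + 1 + 6 * T (-1)

def gi (l : List (ZMod 7)) (i : ℤ) : ZMod 7 := if 0 ≤ i then l.getD i.toNat 0 else 0

def step (l : List (ZMod 7)) : List (ZMod 7) :=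
  (List.range (l.length + 3)).map fun (i : ℕ) =>
    4 * gi l ((i : ℤ) - 3) + 6 * gi l ((i : ℤ) - 2) + gi l ((i : ℤ) - 1) + 6 * gi l ((i : ℤ))

def L : ℕ → List (ZMod 7)
  | 0 => [1]
  | n+1 => step (L n)

lemma gi_neg (l : List (ZMod 7)) {i : ℤ} (h : i < 0) : gi l i = 0 := by
  simp [gi, not_le.2 h]

lemma gi_ge (l : List (ZMod 7)) {i : ℤ} (h : (l.length : ℤ) ≤ i) : gi l i = 0 := by
  unfold gi
  split
  · exact List.getD_eq_default _ _ (by omega)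
  · rfl

lemma len_step (l : List (ZMod 7)) : (step l).length = l.length + 3 := by simp [step]

lemma len_L (n : ℕ) : (L n).length = 3 * n + 1 := by
  induction n with
  | zero => rfl
  | succ n ih => rw [L, len_step, ih]; omega

lemma gi_step (l : List (ZMod 7)) {i : ℤ} (h0 : 0 ≤ i) (h1 : i < (l.length : ℤ) + 3) :
    gi (step l) i = 4 * gi l (i - 3) + 6 * gi l (i - 2) + gi l (i - 1) + 6 * gi l i := by
  rw [gi, if_pos h0, step, List.getD_eq_getElem _ _ (by simp; omega),
    List.getElem_map, List.getElem_range, Int.toNat_of_nonneg h0]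

lemma P_eq : P = AddMonoidAlgebra.single 2 4 + AddMonoidAlgebra.single 1 6 + AddMonoidAlgebra.single 0 1
    + AddMonoidAlgebra.single (-1) 6 := by
  have h4 : (4 : LaurentPolynomial (ZMod 7)) = C 4 := (map_ofNat C 4).symm
  have h6 : (6 : LaurentPolynomial (ZMod 7)) = C 6 := (map_ofNat C 6).symm
  have h1 : (1 : LaurentPolynomial (ZMod 7)) = AddMonoidAlgebra.single 0 1 :=
    AddMonoidAlgebra.one_def
  rw [P, h4, h6, h1]
  simp only [← single_eq_C_mul_T]

lemma mulP (f : LaurentPolynomial (ZMod 7)) (k : ℤ) :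
    (f * P).coeff k = 4 * f.coeff (k - 2) + 6 * f.coeff (k - 1) + f.coeff k + 6 * f.coeff (k + 1) := by
  have ha : ∀ (a b : LaurentPolynomial (ZMod 7)) (k : ℤ), (a + b).coeff k = a.coeff k + b.coeff k :=
    fun _ _ _ => rfl
  rw [P_eq, mul_add, mul_add, mul_add, ha, ha, ha,
    AddMonoidAlgebra.coeff_mul_single_apply, AddMonoidAlgebra.coeff_mul_single_apply,
    AddMonoidAlgebra.coeff_mul_single_apply, AddMonoidAlgebra.coeff_mul_single_apply]
  simp only [neg_zero, add_zero, neg_neg, ← sub_eq_add_neg]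
  ring

lemma coeff_eq : ∀ (n : ℕ) (k : ℤ), (P ^ n).coeff k = gi (L n) (k + n) := by
  intro n
  induction n with
  | zero =>
    intro k
    rw [pow_zero]
    have h1 : (1 : LaurentPolynomial (ZMod 7)) = AddMonoidAlgebra.single 0 1 :=
      AddMonoidAlgebra.one_def
    rw [h1, AddMonoidAlgebra.coeff_single, Finsupp.single_apply]
    rcases lt_trichotomy k 0 with h | h | h
    · rw [if_neg (by omega), gi_neg _ (by push_cast; omega)]
    · subst h; rw [if_pos rfl]; rfl
    · rw [if_neg (by omega), gi_ge _ (by simp [L]; omega)]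
  | succ n ih =>
    intro k
    rw [pow_succ, mulP, ih, ih, ih, ih]
    have hL := len_L n
    push_cast
    rw [show k + ((n : ℤ) + 1) = k + (n : ℤ) + 1 by ring]
    rcases lt_or_ge (k + (n : ℤ) + 1) 0 with hm | hm
    · rw [gi_neg _ (by omega), gi_neg _ (by omega), gi_neg _ (by omega),
        gi_neg _ (by omega), gi_neg (L (n+1)) (by omega)]
      ring
    · rcases lt_or_ge (k + (n : ℤ) + 1) (3 * n + 4) with hm2 | hm2
      · rw [show L (n + 1) = step (L n) from rfl,
          gi_step _ hm (by rw [hL]; push_cast; omega),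
          show k + (n:ℤ) + 1 - 3 = k - 2 + n by ring,
          show k + (n:ℤ) + 1 - 2 = k - 1 + n by ring,
          show k + (n:ℤ) + 1 - 1 = k + n by ring,
          show k + (n:ℤ) + 1 = k + 1 + n by ring]
      · rw [gi_ge _ (by rw [hL]; push_cast; omega), gi_ge _ (by rw [hL]; push_cast; omega),
          gi_ge _ (by rw [hL]; push_cast; omega), gi_ge _ (by rw [hL]; push_cast; omega),
          gi_ge (L (n+1)) (by rw [len_L]; push_cast; omega)]
        ring

set_option maxRecDepth 10000 in
theorem stmt6 : ∀ n : ℕ, n < 7 ^ 2 → (P ^ n).coeff 0 ≠ 0 := by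
  have key : ∀ n : ℕ, n < 49 → gi (L n) n ≠ 0 := by decide
  intro n hn
  rw [coeff_eq, zero_add]
  exact key n (by norm_num at hn ⊢; omega)
end
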